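/- Let s(m,n) denote the number of saturated covers on the grid [m] × [n]. Then for all m, n ≥ 0, s(m, n+1) = s(m,n) + Σ_{k=0}^{m} C(m+1, k) · s(k, n). -/

import Mathlib

/-- A saturated cover on the grid `[m] × [n] = {0,…,m} × {0,…,n}`.
`H i j = true` means the horizontal edge `(i,j) → (i+1,j)` is present (valid for `i < m`, `j ≤ n`);
`V i j = true` means the vertical edge `(i,j) → (i,j+1)` is present (valid for `i ≤ m`, `j < n`). -/
structure SatCover (m n : ℕ) where
  H : ℕ → ℕ → Bool
  V : ℕ → ℕ → Bool
  H_bound : ∀ i j, H i j = true → i < m ∧ j ≤ n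
  V_bound : ∀ i j, V i j = true → i ≤ m ∧ j < n
  H_down : ∀ i j k, k < j → H i j = true → H i k = true
  V_left : ∀ i j k, k < i → V i j = true → V k j = true
  sq₁ : ∀ i j, H i j = true → H i (j+1) = true → V i j = true → V (i+1) j = true
  sq₂ : ∀ i j, H i j = true → H i (j+1) = true → V (i+1) j = true → V i j = true
  sq₃ : ∀ i j, H i j = true → V i j = true → V (i+1) j = true → H i (j+1) = true
  sq₄ : ∀ i j, H i (j+1) = true → V i j = true → V (i+1) j = true → H i j = true

/-- `satCount m n` is the number of saturated covers on `[m] × [n]`. -/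
noncomputable def satCount (m n : ℕ) : ℕ := Nat.card (SatCover m n)

structure Cfg (m n : ℕ) where
  h : ℕ → ℕ
  w : ℕ → ℕ
  hb : ∀ i, h i ≤ n + 1
  hz : ∀ i, m ≤ i → h i = 0
  wb : ∀ j, w j ≤ m + 1
  wz : ∀ j, n ≤ j → w j = 0
  c1 : ∀ i j, w j = i + 1 → h i ≤ j + 1
  c2 : ∀ i j, h i = j + 1 → w j ≤ i + 1

theorem Cfg.ext' {m n : ℕ} {a b : Cfg m n} (h1 : a.h = b.h) (h2 : a.w = b.w) : a = b := by
  cases a; cases b; simp_all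

instance Cfg.finite (m n : ℕ) : Finite (Cfg m n) := by
  apply Finite.of_injective (β := (Fin m → Fin (n+2)) × (Fin n → Fin (m+2)))
    (fun c => (fun i => ⟨c.h i, by have := c.hb i; omega⟩, fun j => ⟨c.w j, by have := c.wb j; omega⟩))
  intro a b hab
  obtain ⟨hab1, hab2⟩ := Prod.mk.injEq .. ▸ hab
  apply Cfg.ext'
  · funext i
    rcases lt_or_ge i m with hi | hi
    · exact congrArg Fin.val (congrFun hab1 ⟨i, hi⟩)
    · rw [a.hz i hi, b.hz i hi]
  · funext j
    rcases lt_or_ge j n with hj | hj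
    · exact congrArg Fin.val (congrFun hab2 ⟨j, hj⟩)
    · rw [a.wz j hj, b.wz j hj]

lemma card_split {α : Type*} [Finite α] (P Q : α → Prop) :
    Nat.card {x // P x} = Nat.card {x // P x ∧ Q x} + Nat.card {x // P x ∧ ¬ Q x} := by
  classical
  rw [← Nat.card_sum]
  apply Nat.card_congr; apply Equiv.symm
  exact ((Equiv.subtypeSubtypeEquivSubtypeInter P Q).sumCongr
    (Equiv.subtypeSubtypeEquivSubtypeInter P (fun x => ¬ Q x))).symm.trans
    (Equiv.sumCompl (fun x : {x // P x} => Q x.1))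

theorem SatCover.ext' {m n : ℕ} {a b : SatCover m n} (h1 : a.H = b.H) (h2 : a.V = b.V) :
    a = b := by
  cases a; cases b; simp_all

section E0
variable {m n : ℕ}

lemma exH (S : SatCover m n) (i : ℕ) : ∃ j, S.H i j = false := by
  refine ⟨n+1, ?_⟩
  cases e : S.H i (n+1)
  · rfl
  · have := (S.H_bound i (n+1) e).2; omega

lemma exV (S : SatCover m n) (j : ℕ) : ∃ i, S.V i j = false := by
  refine ⟨m+1, ?_⟩
  cases e : S.V (m+1) j
  · rfl
  · have := (S.V_bound (m+1) j e).1; omega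

noncomputable def hgt (S : SatCover m n) (i : ℕ) : ℕ := Nat.find (exH S i)
noncomputable def wid (S : SatCover m n) (j : ℕ) : ℕ := Nat.find (exV S j)

lemma H_iff (S : SatCover m n) (i j : ℕ) : S.H i j = true ↔ j < hgt S i := by
  constructor
  · intro hH
    by_contra hc
    push_neg at hc
    have hfind : S.H i (hgt S i) = false := Nat.find_spec (exH S i)
    rcases eq_or_lt_of_le hc with e | l
    · rw [e] at hfind; rw [hH] at hfind; cases hfind
    · have := S.H_down i j (hgt S i) l hH
      rw [this] at hfind; cases hfind
  · intro hj
    have := Nat.find_min (exH S i) hj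
    simpa using this

lemma V_iff (S : SatCover m n) (i j : ℕ) : S.V i j = true ↔ i < wid S j := by
  constructor
  · intro hV
    by_contra hc
    push_neg at hc
    have hfind : S.V (wid S j) j = false := Nat.find_spec (exV S j)
    rcases eq_or_lt_of_le hc with e | l
    · rw [e] at hfind; rw [hV] at hfind; cases hfind
    · have := S.V_left i j (wid S j) l hV
      rw [this] at hfind; cases hfind
  · intro hi
    have := Nat.find_min (exV S j) hi
    simpa using this

noncomputable def E0 : SatCover m n ≃ Cfg m n where
  toFun S :=
    { h := hgt S
      w := wid S
      hb := fun i => by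
        by_contra hc
        push_neg at hc
        have h1 : S.H i (n+1) = true := (H_iff S i (n+1)).2 (by omega)
        have := (S.H_bound _ _ h1).2; omega
      hz := fun i hi => by
        by_contra hc
        have h1 : S.H i 0 = true := (H_iff S i 0).2 (by omega)
        have := (S.H_bound _ _ h1).1; omega
      wb := fun j => by
        by_contra hc
        push_neg at hc
        have h1 : S.V (m+1) j = true := (V_iff S (m+1) j).2 (by omega)
        have := (S.V_bound _ _ h1).1; omega
      wz := fun j hj => by
        by_contra hc
        have h1 : S.V 0 j = true := (V_iff S 0 j).2 (by omega)
        have := (S.V_bound _ _ h1).2; omega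
      c1 := fun i j hw => by
        by_contra hc
        push_neg at hc
        have h1 : S.H i j = true := (H_iff S i j).2 (by omega)
        have h2 : S.H i (j+1) = true := (H_iff S i (j+1)).2 (by omega)
        have h3 : S.V i j = true := (V_iff S i j).2 (by omega)
        have h4 := (V_iff S (i+1) j).1 (S.sq₁ i j h1 h2 h3)
        omega
      c2 := fun i j hh => by
        by_contra hc
        push_neg at hc
        have h1 : S.H i j = true := (H_iff S i j).2 (by omega)
        have h3 : S.V i j = true := (V_iff S i j).2 (by omega)
        have h4 : S.V (i+1) j = true := (V_iff S (i+1) j).2 (by omega)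
        have h5 := (H_iff S i (j+1)).1 (S.sq₃ i j h1 h3 h4)
        omega }
  invFun c :=
    { H := fun i j => decide (j < c.h i)
      V := fun i j => decide (i < c.w j)
      H_bound := fun i j hd => by
        simp only [decide_eq_true_eq] at hd
        constructor
        · by_contra hc; push_neg at hc; have := c.hz i hc; omega
        · have := c.hb i; omega
      V_bound := fun i j hd => by
        simp only [decide_eq_true_eq] at hd
        constructor
        · have := c.wb j; omega
        · by_contra hc; push_neg at hc; have := c.wz j hc; omega
      H_down := fun i j k hk hd => by
        simp only [decide_eq_true_eq] at *; omega
      V_left := fun i j k hk hd => by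
        simp only [decide_eq_true_eq] at *; omega
      sq₁ := fun i j d1 d2 d3 => by
        simp only [decide_eq_true_eq] at *
        have : c.w j ≠ i + 1 := fun e => by have := c.c1 i j e; omega
        omega
      sq₂ := fun i j d1 d2 d3 => by
        simp only [decide_eq_true_eq] at *; omega
      sq₃ := fun i j d1 d2 d3 => by
        simp only [decide_eq_true_eq] at *
        have : c.h i ≠ j + 1 := fun e => by have := c.c2 i j e; omega
        omega
      sq₄ := fun i j d1 d2 d3 => by
        simp only [decide_eq_true_eq] at *; omega }
  left_inv S := by
    apply SatCover.ext'
    · funext i j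
      cases e : S.H i j
      · simp only [decide_eq_false_iff_not]
        intro hc
        rw [(H_iff S i j).2 hc] at e; cases e
      · simp [(H_iff S i j).1 e]
    · funext i j
      cases e : S.V i j
      · simp only [decide_eq_false_iff_not]
        intro hc
        rw [(V_iff S i j).2 hc] at e; cases e
      · simp [(V_iff S i j).1 e]
  right_inv c := by
    apply Cfg.ext'
    · funext i
      show Nat.find _ = c.h i
      rw [Nat.find_eq_iff]
      constructor
      · simp
      · intro k hk; simp [hk]
    · funext j
      show Nat.find _ = c.w j
      rw [Nat.find_eq_iff]
      constructor
      · simp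
      · intro k hk; simp [hk]

end E0

section Del
variable {r p n : ℕ}

lemma wne (d : Cfg (r+1) n) (hd : d.h p = n + 1) (j : ℕ) : d.w j ≠ p + 1 := by
  intro e
  rcases lt_or_ge j n with hj | hj
  · have := d.c1 p j e; omega
  · have := d.wz j hj; omega

/-- Delete a full column at position `p`. -/
def DelE (hp : p ≤ r) : {d : Cfg (r+1) n // d.h p = n + 1} ≃ Cfg r n where
  toFun d :=
    { h := fun i => if i < p then d.1.h i else d.1.h (i+1)
      w := fun j => if d.1.w j ≤ p then d.1.w j else d.1.w j - 1
      hb := fun i => by split_ifs <;> exact d.1.hb _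
      hz := fun i hi => by
        rw [if_neg (by omega)]; exact d.1.hz _ (by omega)
      wb := fun j => by
        have := d.1.wb j; split_ifs <;> omega
      wz := fun j hj => by
        have := d.1.wz j hj; rw [if_pos (by omega)]; omega
      c1 := fun i j e => by
        by_cases hwp : d.1.w j ≤ p
        · rw [if_pos hwp] at e
          rw [if_pos (by omega : i < p)]
          exact d.1.c1 i j e
        · rw [if_neg hwp] at e
          push_neg at hwp
          have hw2 : p + 2 ≤ d.1.w j := by have := wne d.1 d.2 j; omega
          rw [if_neg (by omega : ¬ i < p)]
          exact d.1.c1 (i+1) j (by omega)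
      c2 := fun i j e => by
        by_cases hip : i < p
        · rw [if_pos hip] at e
          have := d.1.c2 i j e
          rw [if_pos (by omega)]; omega
        · rw [if_neg hip] at e
          have := d.1.c2 (i+1) j e
          split_ifs <;> omega }
  invFun c :=
    ⟨{ h := fun i => if i < p then c.h i else if i = p then n + 1 else c.h (i-1)
       w := fun j => if c.w j ≤ p then c.w j else c.w j + 1
       hb := fun i => by
         split_ifs <;> first | exact c.hb _ | rfl
       hz := fun i hi => by
         rw [if_neg (by omega), if_neg (by omega)]
         exact c.hz _ (by omega)
       wb := fun j => by
         have := c.wb j; split_ifs <;> omega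
       wz := fun j hj => by
         have := c.wz j hj; rw [if_pos (by omega)]; omega
       c1 := fun i j e => by
         by_cases hwp : c.w j ≤ p
         · rw [if_pos hwp] at e
           rw [if_pos (by omega : i < p)]
           exact c.c1 i j e
         · rw [if_neg hwp] at e
           push_neg at hwp
           rw [if_neg (by omega : ¬ i < p), if_neg (by omega : ¬ i = p)]
           exact c.c1 (i-1) j (by omega)
       c2 := fun i j e => by
         by_cases hip : i < p
         · rw [if_pos hip] at e
           have := c.c2 i j e
           rw [if_pos (by omega)]; omega
         · by_cases hieq : i = p
           · rw [if_neg hip, if_pos hieq] at e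
             have hj : j = n := by omega
             have : c.w j = 0 := c.wz j (by omega)
             rw [if_pos (by omega)]; omega
           · rw [if_neg hip, if_neg hieq] at e
             have := c.c2 (i-1) j e
             split_ifs <;> omega },
     by dsimp only; rw [if_neg (lt_irrefl p), if_pos rfl]⟩
  left_inv d := by
    apply Subtype.ext
    apply Cfg.ext'
    · funext i
      dsimp only
      by_cases hip : i < p
      · rw [if_pos hip, if_pos hip]
      · by_cases hieq : i = p
        · subst hieq
          rw [if_neg hip, if_pos rfl]
          exact d.2.symm
        · rw [if_neg hip, if_neg hieq, if_neg (by omega : ¬ i - 1 < p)]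
          congr 1; omega
    · funext j
      dsimp only
      have hw := wne d.1 d.2 j
      by_cases hwp : d.1.w j ≤ p
      · simp only [if_pos hwp, if_pos hwp]
      · simp only [if_neg hwp, if_neg (by omega : ¬ d.1.w j - 1 ≤ p)]
        omega
  right_inv c := by
    apply Cfg.ext'
    · funext i
      dsimp only
      by_cases hip : i < p
      · rw [if_pos hip, if_pos hip]
      · rw [if_neg hip, if_neg (by omega : ¬ i + 1 < p), if_neg (by omega : ¬ i + 1 = p)]
        congr 1
    · funext j
      dsimp only
      by_cases hwp : c.w j ≤ p
      · simp only [if_pos hwp, if_pos hwp]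
      · simp only [if_neg hwp, if_neg (by omega : ¬ c.w j + 1 ≤ p)]
        omega

lemma DelE_h (hp : p ≤ r) (d : {d : Cfg (r+1) n // d.h p = n + 1}) (i : ℕ) :
    (DelE hp d).h i = if i < p then d.1.h i else d.1.h (i+1) := rfl

end Del

section Strip
variable {k n q : ℕ}

/-- Strip an empty top row. -/
def Strip0 : {c : Cfg k (n+1) // (∀ i, c.h i ≤ n + 1) ∧ c.w n = 0} ≃ Cfg k n where
  toFun c :=
    { h := c.1.h
      w := c.1.w
      hb := c.2.1
      hz := c.1.hz
      wb := c.1.wb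
      wz := fun j hj => by
        rcases eq_or_lt_of_le hj with e | l
        · rw [← e]; exact c.2.2
        · exact c.1.wz j l
      c1 := c.1.c1
      c2 := c.1.c2 }
  invFun c :=
    ⟨{ h := c.h
       w := c.w
       hb := fun i => by have := c.hb i; omega
       hz := c.hz
       wb := c.wb
       wz := fun j hj => c.wz j (by omega)
       c1 := c.c1
       c2 := c.c2 },
     fun i => c.hb i, c.wz n le_rfl⟩
  left_inv c := by apply Subtype.ext; apply Cfg.ext' <;> rfl
  right_inv c := by apply Cfg.ext' <;> rfl

/-- Strip a top row with `w n = q+1`. -/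
def Strip1 (hq : q ≤ k) :
    {c : Cfg k (n+1) // (∀ i, c.h i ≤ n + 1) ∧ c.w n = q + 1} ≃
      {c : Cfg k n // ∀ i, i < q → c.h i ≤ n} where
  toFun c :=
    ⟨{ h := c.1.h
       w := fun j => if j = n then 0 else c.1.w j
       hb := c.2.1
       hz := c.1.hz
       wb := fun j => by
         by_cases e : j = n
         · rw [if_pos e]; omega
         · rw [if_neg e]; exact c.1.wb j
       wz := fun j hj => by
         by_cases e : j = n
         · rw [if_pos e]
         · rw [if_neg e]; exact c.1.wz j (by omega)
       c1 := fun i j e => by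
         by_cases hjn : j = n
         · rw [if_pos hjn] at e; omega
         · rw [if_neg hjn] at e; exact c.1.c1 i j e
       c2 := fun i j e => by
         by_cases hjn : j = n
         · rw [if_pos hjn]; omega
         · rw [if_neg hjn]; exact c.1.c2 i j e },
     by
       intro i hi
       show c.1.h i ≤ n
       have hb := c.2.1 i
       rcases eq_or_lt_of_le hb with e | l
       · have h3 := c.1.c2 i n e
         have h4 := c.2.2
         omega
       · omega⟩
  invFun c :=
    ⟨{ h := c.1.h
       w := fun j => if j = n then q + 1 else c.1.w j
       hb := fun i => by have := c.1.hb i; omega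
       hz := c.1.hz
       wb := fun j => by
         by_cases e : j = n
         · rw [if_pos e]; omega
         · rw [if_neg e]; have := c.1.wb j; omega
       wz := fun j hj => by
         rw [if_neg (by omega)]
         exact c.1.wz j (by omega)
       c1 := fun i j e => by
         by_cases hjn : j = n
         · rw [if_pos hjn] at e
           subst hjn
           have := c.1.hb i
           omega
         · rw [if_neg hjn] at e
           exact c.1.c1 i j e
       c2 := fun i j e => by
         by_cases hjn : j = n
         · rw [if_pos hjn]
           subst hjn
           have h4 : ¬ i < q := fun hc => by have := c.2 i hc; omega
           omega
         · rw [if_neg hjn]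
           exact c.1.c2 i j e },
     by
       refine ⟨fun i => c.1.hb i, ?_⟩
       dsimp only
       rw [if_pos rfl]⟩
  left_inv c := by
    apply Subtype.ext; apply Cfg.ext'
    · rfl
    · funext j
      dsimp only
      by_cases e : j = n
      · subst e; rw [if_pos rfl]; exact c.2.2.symm
      · rw [if_neg e, if_neg e]
  right_inv c := by
    apply Subtype.ext; apply Cfg.ext'
    · rfl
    · funext j
      dsimp only
      by_cases e : j = n
      · subst e; rw [if_pos rfl]; exact (c.1.wz _ le_rfl).symm
      · rw [if_neg e, if_neg e]

end Strip


noncomputable def sC (m n : ℕ) : ℕ := Nat.card (Cfg m n)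
noncomputable def Ms (r p n : ℕ) : ℕ := Nat.card {c : Cfg r n // ∀ i, p ≤ i → c.h i ≤ n}
noncomputable def Mp (r p n : ℕ) : ℕ := Nat.card {c : Cfg r n // ∀ i, i < p → c.h i ≤ n}
noncomputable def NFf (r n : ℕ) : ℕ := Nat.card {c : Cfg r n // ∀ i, c.h i ≤ n}

lemma satCount_eq (m n : ℕ) : satCount m n = sC m n := Nat.card_congr E0

section Counting
variable {r p n q k : ℕ}

lemma L2 (hp : p ≤ r) :
    Nat.card {d : Cfg (r+1) n // d.h p = n + 1 ∧ ∀ i, p + 1 ≤ i → d.h i ≤ n} = Ms r p n := by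
  apply Nat.card_congr
  refine (Equiv.subtypeSubtypeEquivSubtypeInter _ _).symm.trans ?_
  refine Equiv.subtypeEquiv (DelE hp) (fun d => ?_)
  constructor
  · intro hd i hi
    rw [DelE_h, if_neg (by omega)]
    exact hd (i+1) (by omega)
  · intro hd i hi
    have h2 := hd (i-1) (by omega)
    rw [DelE_h, if_neg (by omega)] at h2
    have e : i - 1 + 1 = i := by omega
    rwa [e] at h2

lemma L1 (hp : p ≤ r) :
    Nat.card {d : Cfg (r+1) n // d.h p = n + 1 ∧ ∀ i, i < p → d.h i ≤ n} = Mp r p n := by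
  apply Nat.card_congr
  refine (Equiv.subtypeSubtypeEquivSubtypeInter _ _).symm.trans ?_
  refine Equiv.subtypeEquiv (DelE hp) (fun d => ?_)
  constructor
  · intro hd i hi
    rw [DelE_h, if_pos hi]
    exact hd i hi
  · intro hd i hi
    have h2 := hd i hi
    rwa [DelE_h, if_pos hi] at h2

lemma Msucc (hp : p ≤ r) : Ms (r+1) (p+1) n = Ms (r+1) p n + Ms r p n := by
  rw [Ms, card_split (fun c : Cfg (r+1) n => ∀ i, p + 1 ≤ i → c.h i ≤ n) (fun c => c.h p ≤ n)]
  congr 1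
  · apply Nat.card_congr
    apply Equiv.subtypeEquivRight
    intro c
    constructor
    · rintro ⟨hA, hB⟩ i hi
      rcases eq_or_lt_of_le hi with e | l
      · rwa [← e]
      · exact hA i l
    · intro hA
      exact ⟨fun i hi => hA i (by omega), hA p le_rfl⟩
  · rw [← L2 hp]
    apply Nat.card_congr
    apply Equiv.subtypeEquivRight
    intro c
    have := c.hb p
    constructor
    · rintro ⟨hA, hB⟩
      exact ⟨by omega, hA⟩
    · rintro ⟨hB, hA⟩
      exact ⟨hA, by omega⟩

lemma Msucc' (h : p < r) : Ms r (p+1) n = Ms r p n + Ms (r-1) p n := by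
  obtain ⟨r', rfl⟩ : ∃ r', r = r' + 1 := ⟨r - 1, by omega⟩
  simpa using Msucc (n := n) (by omega : p ≤ r')

lemma Mpsucc (hp : p ≤ r) : Mp (r+1) p n = Mp (r+1) (p+1) n + Mp r p n := by
  rw [Mp, card_split (fun c : Cfg (r+1) n => ∀ i, i < p → c.h i ≤ n) (fun c => c.h p ≤ n)]
  congr 1
  · apply Nat.card_congr
    apply Equiv.subtypeEquivRight
    intro c
    constructor
    · rintro ⟨hA, hB⟩ i hi
      rcases Nat.lt_succ_iff_lt_or_eq.mp hi with l | e
      · exact hA i l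
      · rwa [e]
    · intro hA
      exact ⟨fun i hi => hA i (by omega), hA p (by omega)⟩
  · rw [← L1 hp]
    apply Nat.card_congr
    apply Equiv.subtypeEquivRight
    intro c
    have := c.hb p
    constructor
    · rintro ⟨hA, hB⟩
      exact ⟨by omega, hA⟩
    · rintro ⟨hB, hA⟩
      exact ⟨hA, by omega⟩

lemma Ms_all (hp : r ≤ p) : Ms r p n = sC r n :=
  Nat.card_congr (Equiv.subtypeUnivEquiv (fun c i hi => by rw [c.hz i (by omega)]; omega))

lemma Ms_zero : Ms r 0 n = NFf r n :=
  Nat.card_congr (Equiv.subtypeEquivRight (fun c => by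
    constructor
    · intro hA i; exact hA i (by omega)
    · intro hA i _; exact hA i))

lemma Mp_zero : Mp r 0 n = sC r n :=
  Nat.card_congr (Equiv.subtypeUnivEquiv (fun c i hi => by omega))

lemma Mp_all (hp : r ≤ p) : Mp r p n = NFf r n :=
  Nat.card_congr (Equiv.subtypeEquivRight (fun c => by
    constructor
    · intro hA i
      rcases lt_or_ge i p with l | l
      · exact hA i l
      · rw [c.hz i (by omega)]; omega
    · intro hA i _; exact hA i))

lemma pascal_sum (f : ℕ → ℕ) (p : ℕ) :
    ∑ a ∈ Finset.range (p+2), Nat.choose (p+1) a * f a =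
      ∑ a ∈ Finset.range (p+1), Nat.choose p a * f a
        + ∑ a ∈ Finset.range (p+1), Nat.choose p a * f (a+1) := by
  rw [Finset.sum_range_succ' (fun a => Nat.choose (p+1) a * f a) (p+1)]
  have e1 : ∑ a ∈ Finset.range (p+1), Nat.choose (p+1) (a+1) * f (a+1)
      = ∑ a ∈ Finset.range (p+1), (Nat.choose p a * f (a+1) + Nat.choose p (a+1) * f (a+1)) := by
    apply Finset.sum_congr rfl
    intro a _
    rw [Nat.choose_succ_succ, add_mul]
  rw [e1, Finset.sum_add_distrib]
  have t1 : ∑ a ∈ Finset.range (p+1), Nat.choose p (a+1) * f (a+1)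
      = ∑ a ∈ Finset.range p, Nat.choose p (a+1) * f (a+1) := by
    rw [Finset.sum_range_succ]
    simp
  have t2 : ∑ a ∈ Finset.range (p+1), Nat.choose p a * f a
      = ∑ a ∈ Finset.range p, Nat.choose p (a+1) * f (a+1) + Nat.choose p 0 * f 0 :=
    Finset.sum_range_succ' (fun a => Nat.choose p a * f a) p
  simp only [Nat.choose_zero_right, one_mul] at t2 ⊢
  omega

lemma P3 : ∀ p r, p ≤ r →
    Ms r p n = ∑ a ∈ Finset.range (p+1), Nat.choose p a * NFf (r-a) n := by
  intro p
  induction p with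
  | zero => intro r _; simp [Ms_zero]
  | succ p ih =>
    intro r hpr
    rw [Msucc' (by omega), ih r (by omega), ih (r-1) (by omega),
      pascal_sum (fun a => NFf (r-a) n) p]
    congr 1
    apply Finset.sum_congr rfl
    intro a ha
    congr 2
    omega

lemma P4 (r n : ℕ) : sC r n = ∑ a ∈ Finset.range (r+1), Nat.choose r a * NFf (r-a) n := by
  rw [← Ms_all (le_refl r), P3 r r le_rfl]

lemma P6 (r n : ℕ) : sC (r+1) n = NFf (r+1) n + ∑ p ∈ Finset.range (r+1), Mp r p n := by
  have key : ∀ q, q ≤ r + 1 →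
      sC (r+1) n = Mp (r+1) q n + ∑ p ∈ Finset.range q, Mp r p n := by
    intro q
    induction q with
    | zero => intro _; simp [Mp_zero]
    | succ q ih =>
      intro hq
      rw [ih (by omega), Mpsucc (by omega : q ≤ r), Finset.sum_range_succ]
      omega
  rw [key (r+1) le_rfl, Mp_all le_rfl]

noncomputable def Rf (k q n : ℕ) : ℕ :=
  Nat.card {c : Cfg k (n+1) // (∀ i, c.h i ≤ n + 1) ∧ c.w n ≤ q}

lemma R0 : Rf k 0 n = sC k n := by
  rw [Rf, sC]
  apply Nat.card_congr
  refine (Equiv.subtypeEquivRight ?_).trans (Strip0 (k := k) (n := n))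
  intro c
  constructor
  · rintro ⟨hA, hB⟩; exact ⟨hA, by omega⟩
  · rintro ⟨hA, hB⟩; exact ⟨hA, by omega⟩

lemma Rsucc (hq : q ≤ k) : Rf k (q+1) n = Rf k q n + Mp k q n := by
  rw [Rf, card_split (fun c : Cfg k (n+1) => (∀ i, c.h i ≤ n + 1) ∧ c.w n ≤ q + 1)
    (fun c => c.w n ≤ q)]
  congr 1
  · apply Nat.card_congr
    apply Equiv.subtypeEquivRight
    intro c
    constructor
    · rintro ⟨⟨hA, _⟩, hB⟩; exact ⟨hA, hB⟩
    · rintro ⟨hA, hB⟩; exact ⟨⟨hA, by omega⟩, hB⟩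
  · rw [Mp, ← Nat.card_congr (Strip1 (n := n) hq)]
    apply Nat.card_congr
    apply Equiv.subtypeEquivRight
    intro c
    constructor
    · rintro ⟨⟨hA, hB⟩, hC⟩; exact ⟨hA, by omega⟩
    · rintro ⟨hA, hB⟩; exact ⟨⟨hA, by omega⟩, by omega⟩

lemma Rtop : NFf k (n+1) = Rf k (k+1) n := by
  apply Nat.card_congr
  apply Equiv.subtypeEquivRight
  intro c
  constructor
  · intro hA; exact ⟨hA, by have := c.wb n; omega⟩
  · rintro ⟨hA, _⟩; exact hA

lemma T1 (k n : ℕ) : NFf k (n+1) = sC k n + ∑ q ∈ Finset.range (k+1), Mp k q n := by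
  have key : ∀ q, q ≤ k + 1 →
      Rf k q n = sC k n + ∑ p ∈ Finset.range q, Mp k p n := by
    intro q
    induction q with
    | zero => intro _; simp [R0]
    | succ q ih =>
      intro hq
      rw [Rsucc (by omega : q ≤ k), ih (by omega), Finset.sum_range_succ]
      omega
  rw [Rtop, key (k+1) le_rfl]

lemma starstar (k n : ℕ) : NFf k (n+1) + NFf (k+1) n = sC k n + sC (k+1) n := by
  have h1 := T1 k n
  have h2 := P6 k n
  omega

lemma XA (m n : ℕ) :
    (∑ a ∈ Finset.range (m+1), Nat.choose m a * NFf (m+1-a) n) + sC m n = sC (m+1) n := by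
  rw [P4 (m+1) n, pascal_sum (fun a => NFf (m+1-a) n) m, P4 m n]
  congr 1
  apply Finset.sum_congr rfl
  intro a ha
  simp only [Finset.mem_range] at ha
  have e : m + 1 - (a + 1) = m - a := by omega
  rw [e]

end Counting

theorem stmt_1 (m n : ℕ) :
    satCount m (n + 1) =
      satCount m n + ∑ k ∈ Finset.range (m + 1), Nat.choose (m + 1) k * satCount k n := by
  have h1 : sC m (n+1) = ∑ a ∈ Finset.range (m+1), Nat.choose m a * NFf (m-a) (n+1) :=
    P4 m (n+1)
  have hMAIN : sC m (n+1) + (∑ a ∈ Finset.range (m+1), Nat.choose m a * NFf (m-a+1) n)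
      = (∑ a ∈ Finset.range (m+1), Nat.choose m a * sC (m-a) n)
        + (∑ a ∈ Finset.range (m+1), Nat.choose m a * sC (m-a+1) n) := by
    rw [h1, ← Finset.sum_add_distrib, ← Finset.sum_add_distrib]
    apply Finset.sum_congr rfl
    intro a ha
    rw [← Nat.mul_add, ← Nat.mul_add, starstar (m-a) n]
  have hXA : (∑ a ∈ Finset.range (m+1), Nat.choose m a * NFf (m-a+1) n) + sC m n
      = sC (m+1) n := by
    rw [← XA m n]
    congr 1
    apply Finset.sum_congr rfl
    intro a ha
    simp only [Finset.mem_range] at ha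
    have e : m + 1 - a = m - a + 1 := by omega
    rw [e]
  have hS1 : (∑ a ∈ Finset.range (m+1), Nat.choose m a * sC (m-a) n)
      = ∑ a ∈ Finset.range (m+1), Nat.choose m a * sC a n := by
    rw [← Finset.sum_range_reflect (fun a => Nat.choose m a * sC a n) (m+1)]
    apply Finset.sum_congr rfl
    intro a ha
    simp only [Finset.mem_range] at ha
    have e : m + 1 - 1 - a = m - a := by omega
    rw [e, Nat.choose_symm (by omega : a ≤ m)]
  have hS2 : (∑ a ∈ Finset.range (m+1), Nat.choose m a * sC (m-a+1) n)
      = ∑ a ∈ Finset.range (m+1), Nat.choose m a * sC (a+1) n := by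
    rw [← Finset.sum_range_reflect (fun a => Nat.choose m a * sC (a+1) n) (m+1)]
    apply Finset.sum_congr rfl
    intro a ha
    simp only [Finset.mem_range] at ha
    have e : m + 1 - 1 - a = m - a := by omega
    rw [e, Nat.choose_symm (by omega : a ≤ m)]
  have hB : (∑ a ∈ Finset.range (m+1), Nat.choose m a * sC (a+1) n)
      = (∑ a ∈ Finset.range m, Nat.choose m a * sC (a+1) n) + sC (m+1) n := by
    rw [Finset.sum_range_succ, Nat.choose_self, one_mul]
  have hA : (∑ a ∈ Finset.range (m+1), Nat.choose m a * sC a n)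
      = (∑ a ∈ Finset.range m, Nat.choose m (a+1) * sC (a+1) n) + sC 0 n := by
    rw [Finset.sum_range_succ' (fun a => Nat.choose m a * sC a n) m]
    simp
  have hG : (∑ k ∈ Finset.range (m+1), Nat.choose (m+1) k * sC k n)
      = (∑ k ∈ Finset.range m, Nat.choose (m+1) (k+1) * sC (k+1) n) + sC 0 n := by
    rw [Finset.sum_range_succ' (fun k => Nat.choose (m+1) k * sC k n) m]
    simp
  have hGsplit : (∑ k ∈ Finset.range m, Nat.choose (m+1) (k+1) * sC (k+1) n)
      = (∑ k ∈ Finset.range m, Nat.choose m k * sC (k+1) n)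
        + ∑ k ∈ Finset.range m, Nat.choose m (k+1) * sC (k+1) n := by
    rw [← Finset.sum_add_distrib]
    apply Finset.sum_congr rfl
    intro k _
    rw [Nat.choose_succ_succ, add_mul]
  simp only [satCount_eq]
  omega
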